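/- Let $G$ be a group, $k$ a field, $M$ a simple $kG$-module, and $H \le G$ a subgroup of finite index. Then $M$ contains a simple $kH$-submodule. -/

import Mathlib

open Representation

namespace Stmt9
variable {k G M : Type*} [Field k] [Group G] [AddCommGroup M] [Module k M]

noncomputable instance myACG {V : Type*} [Field k] [AddCommGroup V] [Module k V]
    {H : Type*} [Group H] (σ : Representation k H V) : AddCommGroup σ.asModule :=
  inferInstanceAs <| AddCommGroup V

variable (ρ : Representation k G M) (L : Subgroup G)

abbrev ρL : Representation k L M := ρ.comp L.subtype

/-- identity on the type synonym -/
abbrev toA (m : M) : (ρL ρ L).asModule := m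

lemma smul_def (a : MonoidAlgebra k L) (m : (ρL ρ L).asModule) :
    (a • m) = (ρL ρ L).asAlgebraHom a m := rfl

/-- From an `L`-invariant `k`-submodule to a `MonoidAlgebra k L`-submodule. -/
noncomputable def subOf (W : Submodule k M) (hW : ∀ g ∈ L, ∀ m ∈ W, ρ g m ∈ W) :
    Submodule (MonoidAlgebra k L) (ρL ρ L).asModule where
  carrier := (W : Set M)
  add_mem' := W.add_mem
  zero_mem' := W.zero_mem
  smul_mem' := by
    intro a m hm
    show (ρL ρ L).asAlgebraHom a m ∈ W
    induction a using MonoidAlgebra.induction_on with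
    | of g =>
      rw [MonoidAlgebra.of_apply, Representation.asAlgebraHom_single_one]
      exact hW g g.2 m hm
    | add f g hf hg => rw [map_add]; exact W.add_mem hf hg
    | smul r f hf => rw [map_smul]; exact W.smul_mem r hf

@[simp] lemma mem_subOf {W : Submodule k M} {hW} {m : M} : m ∈ subOf ρ L W hW ↔ m ∈ W := Iff.rfl

/-- From a `MonoidAlgebra k L`-submodule to a `k`-submodule. -/
noncomputable def subTo (U : Submodule (MonoidAlgebra k L) (ρL ρ L).asModule) :
    Submodule k M where
  carrier := (U : Set (ρL ρ L).asModule)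
  add_mem' := U.add_mem
  zero_mem' := U.zero_mem
  smul_mem' := by
    intro r m hm
    have h2 : ((MonoidAlgebra.single (1 : L) r : MonoidAlgebra k L) • (toA ρ L m))
        = r • m := by
      rw [smul_def, Representation.asAlgebraHom_single]; simp; rfl
    exact h2 ▸ U.smul_mem _ hm

@[simp] lemma mem_subTo {U} {m : M} : m ∈ subTo ρ L U ↔ m ∈ U := Iff.rfl

lemma subTo_inv (U) : ∀ g ∈ L, ∀ m ∈ subTo ρ L U, ρ g m ∈ subTo ρ L U := by
  intro g hg m hm
  have h2 : ((MonoidAlgebra.single (⟨g, hg⟩ : L) (1:k) : MonoidAlgebra k L) • (toA ρ L m))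
      = ρ g m := by
    rw [smul_def, Representation.asAlgebraHom_single]
    simp [ρL]; rfl
  rw [mem_subTo, ← h2]
  exact U.smul_mem _ hm

lemma subOf_subTo (U) (h) : subOf ρ L (subTo ρ L U) h = U := rfl

lemma subTo_subOf (W hW) : subTo ρ L (subOf ρ L W hW) = W := rfl

lemma subTo_ne_top {U} (h : U ≠ ⊤) : subTo ρ L U ≠ ⊤ := by
  intro hT
  apply h
  rw [Submodule.eq_top_iff']
  intro m
  change m ∈ subTo ρ L U; rw [hT]
  trivial

lemma subOf_ne_bot {W hW} (h : W ≠ ⊥) : subOf ρ L W hW ≠ ⊥ := by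
  intro hT
  apply h
  rw [Submodule.eq_bot_iff]
  intro m hm
  have : m ∈ subOf ρ L W hW := hm
  rw [hT] at this
  exact (Submodule.mem_bot (M := (ρL ρ L).asModule) _).mp this

variable {ρ}

lemma hsurj (g : G) : Function.Surjective (ρ g) := fun x =>
  ⟨ρ g⁻¹ x, by rw [← Module.End.mul_apply, ← map_mul, mul_inv_cancel, map_one, Module.End.one_apply]⟩

lemma hmap_mul (g h : G) (W : Submodule k M) :
    Submodule.map (ρ (g * h)) W = Submodule.map (ρ g) (Submodule.map (ρ h) W) := by
  rw [← Submodule.map_comp, map_mul]; rfl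

lemma hmap_top (g : G) : Submodule.map (ρ g) (⊤ : Submodule k M) = ⊤ := by
  rw [Submodule.map_top, LinearMap.range_eq_top]; exact hsurj g

lemma hmap_stab {K : Subgroup G} {W : Submodule k M}
    (hW : ∀ g ∈ K, ∀ m ∈ W, ρ g m ∈ W) {g : G} (hg : g ∈ K) :
    Submodule.map (ρ g) W = W := by
  apply le_antisymm
  · rintro x ⟨m, hm, rfl⟩; exact hW g hg m hm
  · intro m hm
    exact ⟨ρ g⁻¹ m, hW g⁻¹ (inv_mem hg) m hm, by
      rw [← Module.End.mul_apply, ← map_mul, mul_inv_cancel, map_one, Module.End.one_apply]⟩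

theorem artinianK (hnt : Nontrivial M)
    (hsimple : ∀ W : Submodule k M, (∀ g : G, ∀ m ∈ W, ρ g m ∈ W) → W = ⊥ ∨ W = ⊤)
    (K : Subgroup G) [K.Normal] [K.FiniteIndex] :
    IsArtinian (MonoidAlgebra k K) (ρL ρ K).asModule := by
  classical
  obtain ⟨m0, hm0⟩ := exists_ne (0 : M)
  haveI : Finite (G ⧸ K) := Subgroup.finite_quotient_of_finiteIndex (H := K)
  haveI : Fintype (G ⧸ K) := Fintype.ofFinite _
  haveI : Nontrivial ((ρL ρ K).asModule) := hnt
  set R := MonoidAlgebra k K with hR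
  set A := (ρL ρ K).asModule with hA
  -- decomposition g = κ * out
  have hdec : ∀ g : G, ∃ κ ∈ K, g = κ * (QuotientGroup.mk g : G ⧸ K).out := by
    intro g
    obtain ⟨h, hh⟩ := QuotientGroup.mk_out_eq_mul K g
    refine ⟨(QuotientGroup.mk g : G ⧸ K).out * (h : G)⁻¹ * ((QuotientGroup.mk g : G ⧸ K).out)⁻¹,
      Subgroup.Normal.conj_mem ‹K.Normal› _ (inv_mem h.2) _, ?_⟩
    rw [hh]; group
  -- the span of finitely many translates is everything
  set S : Set A := Set.range (fun c : G ⧸ K => toA ρ K (ρ c.out m0)) with hS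
  have hclaim : ∀ g : G, toA ρ K (ρ g m0) ∈ Submodule.span R S := by
    intro g
    obtain ⟨κ, hκ, hgk⟩ := hdec g
    have hbase : toA ρ K (ρ (QuotientGroup.mk g : G ⧸ K).out m0) ∈ Submodule.span R S :=
      Submodule.subset_span ⟨QuotientGroup.mk g, rfl⟩
    have := Submodule.smul_mem (Submodule.span R S)
      (MonoidAlgebra.single (⟨κ, hκ⟩ : K) (1:k)) hbase
    have heq : (MonoidAlgebra.single (⟨κ, hκ⟩ : K) (1:k) : MonoidAlgebra k K) •
        toA ρ K (ρ (QuotientGroup.mk g : G ⧸ K).out m0) = toA ρ K (ρ g m0) := by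
      rw [smul_def, Representation.asAlgebraHom_single]
      show (1:k) • ρ κ (ρ (QuotientGroup.mk g : G ⧸ K).out m0) = ρ g m0
      rw [one_smul, ← Module.End.mul_apply, ← map_mul, ← hgk]
    rwa [heq] at this
  have horbinv : ∀ g : G, ∀ m ∈ Submodule.span k (Set.range fun g : G => ρ g m0),
      ρ g m ∈ Submodule.span k (Set.range fun g : G => ρ g m0) := by
    intro g m hm
    refine Submodule.span_induction ?_ ?_ ?_ ?_ hm
    · rintro x ⟨g', rfl⟩
      exact Submodule.subset_span ⟨g * g', by rw [← Module.End.mul_apply, ← map_mul]⟩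
    · rw [map_zero]; exact Submodule.zero_mem _
    · intro x y _ _ hx hy; rw [map_add]; exact Submodule.add_mem _ hx hy
    · intro r x _ hx; rw [map_smul]; exact Submodule.smul_mem _ r hx
  have horbit : Submodule.span k (Set.range fun g : G => ρ g m0) = ⊤ := by
    rcases hsimple _ horbinv with h | h
    · exfalso
      have : m0 ∈ Submodule.span k (Set.range fun g : G => ρ g m0) :=
        Submodule.subset_span ⟨1, by simp⟩
      rw [h] at this
      exact hm0 (by simpa using this)
    · exact h
  have htop : Submodule.span R S = ⊤ := by
    rw [Submodule.eq_top_iff']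
    intro x
    have hx : (x : M) ∈ Submodule.span k (Set.range fun g : G => ρ g m0) := by
      rw [horbit]; trivial
    have hle : Submodule.span k (Set.range fun g : G => ρ g m0) ≤
        subTo ρ K (Submodule.span R S) := by
      rw [Submodule.span_le]
      rintro y ⟨g, rfl⟩
      exact hclaim g
    exact hle hx
  -- coatomic
  have hfg : (⊤ : Submodule R A).FG := Submodule.fg_def.mpr ⟨S, Set.finite_range _, htop⟩
  haveI : IsCoatomic (Submodule R A) :=
    CompleteLattice.coatomic_of_top_compact ((Submodule.fg_iff_compact _).mp hfg)
  obtain ⟨V, hV, -⟩ := (eq_top_or_exists_le_coatom (⊥ : Submodule R A)).resolve_left bot_ne_top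
  set V' : Submodule k M := subTo ρ K V with hV'
  have hV'inv := subTo_inv ρ K V
  have hV'top : V' ≠ ⊤ := subTo_ne_top ρ K hV.1
  set Vg : G → Submodule k M := fun g => Submodule.map (ρ g) V' with hVg
  have hVKinv : ∀ g : G, ∀ κ ∈ K, ∀ m ∈ Vg g, ρ κ m ∈ Vg g := by
    rintro g κ hκ m ⟨v, hv, rfl⟩
    have hκ' : g⁻¹ * κ * g ∈ K := by
      have := Subgroup.Normal.conj_mem ‹K.Normal› κ hκ g⁻¹
      simpa using this
    refine ⟨ρ (g⁻¹ * κ * g) v, hV'inv _ hκ' v hv, ?_⟩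
    rw [← Module.End.mul_apply, ← Module.End.mul_apply, ← map_mul, ← map_mul]
    congr 2
    group
  have hVg_mul : ∀ g h : G, Submodule.map (ρ g) (Vg h) = Vg (g * h) := by
    intro g h; rw [hVg]; exact (hmap_mul g h V').symm
  have hVg_coset : ∀ g : G, Vg g = Vg (QuotientGroup.mk g : G ⧸ K).out := by
    intro g
    obtain ⟨κ, hκ, hgk⟩ := hdec g
    conv_lhs => rw [hgk]
    rw [← hVg_mul, hmap_stab (hVKinv _) hκ]
  have hNinv : ∀ g : G, ∀ m ∈ (⨅ c : G ⧸ K, Vg c.out), ρ g m ∈ (⨅ c : G ⧸ K, Vg c.out) := by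
    intro g m hm
    rw [Submodule.mem_iInf] at hm ⊢
    intro c
    have h1 : m ∈ Vg (g⁻¹ * c.out) := by
      rw [hVg_coset (g⁻¹ * c.out)]
      exact hm _
    have h2 : ρ g m ∈ Submodule.map (ρ g) (Vg (g⁻¹ * c.out)) :=
      Submodule.mem_map_of_mem h1
    rwa [hVg_mul, ← mul_assoc, mul_inv_cancel, one_mul] at h2
  have hVg_one : Vg 1 = V' := by
    have h1 : ρ (1 : G) = LinearMap.id := by ext m; simp
    show Submodule.map (ρ (1:G)) V' = V'
    rw [h1, Submodule.map_id]
  have hbot : (⨅ c : G ⧸ K, Vg c.out) = ⊥ := by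
    rcases hsimple _ hNinv with h | h
    · exact h
    · exfalso
      apply hV'top
      rw [Submodule.eq_top_iff']
      intro m
      have hm : m ∈ (⨅ c : G ⧸ K, Vg c.out) := by rw [h]; trivial
      have h1 : m ∈ Vg 1 := by
        rw [hVg_coset 1]
        exact Submodule.mem_iInf _ |>.mp hm _
      rwa [hVg_one] at h1
  -- the coatoms
  set Uc : (G ⧸ K) → Submodule R A := fun c => subOf ρ K (Vg c.out) (hVKinv _) with hUc
  have hUcoatom : ∀ c : G ⧸ K, IsCoatom (Uc c) := by
    intro c
    constructor
    · intro hT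
      apply hV'top
      have hVtop : Vg c.out = ⊤ := by
        rw [Submodule.eq_top_iff']
        intro m
        have : toA ρ K m ∈ Uc c := by rw [hT]; trivial
        exact this
      have := congrArg (Submodule.map (ρ (c.out)⁻¹)) hVtop
      rw [hVg_mul, inv_mul_cancel, hmap_top, hVg_one] at this
      exact this.symm ▸ rfl
    · intro W hW
      set W' : Submodule k M := subTo ρ K W with hW'
      have hW'inv := subTo_inv ρ K W
      have hle : Vg c.out ≤ W' := fun x hx => hW.le hx
      set C : Submodule k M := Submodule.comap (ρ c.out) W' with hC
      have hCinv : ∀ κ ∈ K, ∀ m ∈ C, ρ κ m ∈ C := by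
        intro κ hκ m hm
        have hκ' : c.out * κ * (c.out)⁻¹ ∈ K := Subgroup.Normal.conj_mem ‹K.Normal› κ hκ _
        show ρ c.out (ρ κ m) ∈ W'
        have : ρ c.out (ρ κ m) = ρ (c.out * κ * (c.out)⁻¹) (ρ c.out m) := by
          rw [← Module.End.mul_apply, ← map_mul, ← Module.End.mul_apply, ← map_mul]
          congr 2
          group
        rw [this]
        exact hW'inv _ hκ' _ hm
      have hVC : V ≤ subOf ρ K C hCinv := by
        intro v hv
        show ρ c.out v ∈ W'
        exact hle (Submodule.mem_map_of_mem hv)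
      rcases hVC.lt_or_eq with hlt | heq
      · have hCtop : subOf ρ K C hCinv = ⊤ := hV.2 _ hlt
        rw [Submodule.eq_top_iff']
        intro x
        have hx : (x : M) ∈ W' := by
          have h1 : ρ (c.out)⁻¹ (x : M) ∈ C := by
            have : toA ρ K (ρ (c.out)⁻¹ (x : M)) ∈ subOf ρ K C hCinv := by
              rw [hCtop]; trivial
            exact this
          have h2 : ρ c.out (ρ (c.out)⁻¹ (x : M)) ∈ W' := h1
          exact ρ.self_inv_apply c.out x ▸ h2
        exact hx
      · exfalso
        apply hW.2
        intro x hx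
        have h1 : ρ c.out (ρ (c.out)⁻¹ (x : M)) = (x : M) := by
          exact ρ.self_inv_apply c.out x
        have h2 : ρ (c.out)⁻¹ (x : M) ∈ C := by
          show ρ c.out (ρ (c.out)⁻¹ (x : M)) ∈ W'
          rw [h1]
          exact hx
        have h3 : ρ (c.out)⁻¹ (x : M) ∈ V' := by
          have : toA ρ K (ρ (c.out)⁻¹ (x:M)) ∈ subOf ρ K C hCinv := h2
          rw [← heq] at this
          exact this
        show (show M from x) ∈ Vg c.out
        rw [← h1]
        exact Submodule.mem_map_of_mem h3
  -- artinian via embedding into product of simple quotients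
  haveI hsimpleQ : ∀ c : G ⧸ K, IsSimpleModule R (A ⧸ Uc c) := fun c =>
    isSimpleModule_iff_isCoatom.mpr (hUcoatom c)
  haveI : ∀ c : G ⧸ K, IsArtinian R (A ⧸ Uc c) := fun c => by
    haveI := hsimpleQ c
    haveI : Finite (Submodule R (A ⧸ Uc c)) := by
      classical exact Finite.of_equiv _ IsSimpleOrder.equivBool.symm
    exact Finite.to_wellFoundedLT
  set F : A →ₗ[R] ((c : G ⧸ K) → A ⧸ Uc c) := LinearMap.pi (fun c => (Uc c).mkQ) with hF
  have hker : LinearMap.ker F = ⊥ := by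
    rw [hF, LinearMap.ker_pi]
    simp only [Submodule.ker_mkQ]
    rw [Submodule.eq_bot_iff]
    intro x hx
    rw [Submodule.mem_iInf] at hx
    have : (show M from x) ∈ (⨅ c : G ⧸ K, Vg c.out) := by
      rw [Submodule.mem_iInf]
      exact fun c => hx c
    rw [hbot] at this
    exact (Submodule.mem_bot k).mp this
  exact isArtinian_of_injective F (LinearMap.ker_eq_bot.mp hker)

end Stmt9

/-- A simple `kG`-module contains a simple `kH`-submodule for every finite index subgroup
`H ≤ G`. -/
theorem stmt_9 {k G M : Type*} [Field k] [Group G] [AddCommGroup M] [Module k M]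
    (ρ : Representation k G M) (hnt : Nontrivial M)
    (hsimple : ∀ W : Submodule k M, (∀ g : G, ∀ m ∈ W, ρ g m ∈ W) → W = ⊥ ∨ W = ⊤)
    (H : Subgroup G) (hH : H.FiniteIndex) :
    ∃ W : Submodule k M, W ≠ ⊥ ∧ (∀ h ∈ H, ∀ m ∈ W, ρ h m ∈ W) ∧
      ∀ U : Submodule k M, U ≤ W → (∀ h ∈ H, ∀ m ∈ U, ρ h m ∈ U) →
        U = ⊥ ∨ U = W := by
  classical
  haveI := hH
  set K := H.normalCore with hK
  haveI : K.Normal := H.normalCore_normal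
  haveI : K.FiniteIndex := Subgroup.finiteIndex_normalCore H
  haveI hart : IsArtinian (MonoidAlgebra k K) (Stmt9.ρL ρ K).asModule :=
    Stmt9.artinianK hnt hsimple K
  have hKH : ∀ (U : Submodule (MonoidAlgebra k H) (Stmt9.ρL ρ H).asModule),
      ∀ g ∈ K, ∀ m ∈ Stmt9.subTo ρ H U, ρ g m ∈ Stmt9.subTo ρ H U :=
    fun U g hg => Stmt9.subTo_inv ρ H U g (H.normalCore_le hg)
  set f : Submodule (MonoidAlgebra k H) (Stmt9.ρL ρ H).asModule →
      Submodule (MonoidAlgebra k K) (Stmt9.ρL ρ K).asModule :=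
    fun U => Stmt9.subOf ρ K (Stmt9.subTo ρ H U) (hKH U) with hf
  have hmono : StrictMono f := by
    intro U U' h
    refine lt_of_le_of_ne (fun x hx => h.le hx) ?_
    intro heq
    apply h.ne
    ext x
    constructor
    · intro hx
      have h1 : x ∈ f U := hx
      rw [heq] at h1
      exact h1
    · intro hx
      have h1 : x ∈ f U' := hx
      rw [← heq] at h1
      exact h1
  haveI : WellFoundedLT (Submodule (MonoidAlgebra k H) (Stmt9.ρL ρ H).asModule) :=
    hmono.wellFoundedLT
  haveI : Nontrivial ((Stmt9.ρL ρ H).asModule) := hnt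
  rcases eq_bot_or_exists_atom_le (⊤ : Submodule (MonoidAlgebra k H) (Stmt9.ρL ρ H).asModule)
    with h | ⟨W0, hW0, -⟩
  · exact absurd h.symm bot_ne_top
  refine ⟨Stmt9.subTo ρ H W0, ?_, Stmt9.subTo_inv ρ H W0, ?_⟩
  · intro hb
    apply hW0.1
    rw [Submodule.eq_bot_iff]
    intro x hx
    have hx' : (show M from x) ∈ Stmt9.subTo ρ H W0 := hx
    rw [hb] at hx'
    exact (Submodule.mem_bot k).mp hx'
  · intro U hU hUinv
    have hle : Stmt9.subOf ρ H U hUinv ≤ W0 := fun x hx => hU hx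
    rcases hle.lt_or_eq with hlt | heq
    · left
      have hb := hW0.2 _ hlt
      rw [Submodule.eq_bot_iff]
      intro x hx
      have hx' : Stmt9.toA ρ H x ∈ Stmt9.subOf ρ H U hUinv := hx
      rw [hb] at hx'
      exact (Submodule.mem_bot (M := (Stmt9.ρL ρ H).asModule) _).mp hx'
    · right
      rw [← Stmt9.subTo_subOf ρ H U hUinv, heq]
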